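/- For every F ∈ ℝ^{3×3} and every U, V ∈ SO(3), the first moment of the (unnormalized) matrix Fisher density transforms equivariantly: ∫_{SO(3)} R · exp(tr((U F Vᵀ)ᵀ R)) dμ(R) = U · (∫_{SO(3)} Q · exp(tr(Fᵀ Q)) dμ(Q)) · Vᵀ. -/

import Mathlib

open MeasureTheory Matrix

noncomputable section

/-- The space of real `3 × 3` matrices. -/
abbrev M3 := Matrix (Fin 3) (Fin 3) ℝ

instance : MeasurableSpace M3 := (inferInstance : MeasurableSpace (Fin 3 → Fin 3 → ℝ))

instance : BorelSpace M3 := (inferInstance : BorelSpace (Fin 3 → Fin 3 → ℝ))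

/-- The special orthogonal group `SO(3)`: real `3 × 3` matrices `R` with
`Rᵀ R = 1` and `det R = 1`. -/
def SO3 : Set M3 := {R | Rᵀ * R = 1 ∧ R.det = 1}

/-- `μ` is the Haar probability measure of the compact group `SO(3)`, viewed as a measure
on the ambient space of `3 × 3` matrices: it is a probability measure carried by `SO3`
which is invariant under left and right translation by elements of `SO3`. -/
structure IsHaarSO3 (μ : Measure M3) : Prop where
  prob : IsProbabilityMeasure μ
  carried : μ SO3ᶜ = 0
  map_left : ∀ U ∈ SO3, Measure.map (fun R => U * R) μ = μ
  map_right : ∀ V ∈ SO3, Measure.map (fun R => R * V) μ = μ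

/-- **Equivariance of the first moment** of the unnormalized matrix Fisher density:
`∫ R exp(tr((U F Vᵀ)ᵀ R)) dμ = U (∫ Q exp(tr(Fᵀ Q)) dμ) Vᵀ` for `U, V ∈ SO(3)`. -/
-- helpers
lemma cont_entry (k l : Fin 3) : Continuous (fun R : M3 => R k l) := by
  exact (continuous_apply l).comp (continuous_apply k)

lemma cont_trace (F : M3) : Continuous (fun R : M3 => (Fᵀ * R).trace) := by
  have : (fun R : M3 => (Fᵀ * R).trace) = fun R => ∑ i, ∑ j, F j i * R j i := by
    funext R
    simp [Matrix.trace, Matrix.mul_apply, Matrix.diag, Matrix.transpose_apply]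
  rw [this]
  exact continuous_finset_sum _ fun i _ => continuous_finset_sum _ fun j _ =>
    (continuous_const.mul (cont_entry j i))

lemma cont_integrand (F : M3) (k l : Fin 3) :
    Continuous (fun R : M3 => R k l * Real.exp ((Fᵀ * R).trace)) :=
  (cont_entry k l).mul (Real.continuous_exp.comp (cont_trace F))

lemma so3_entry_bound {R : M3} (hR : R ∈ SO3) (k l : Fin 3) : |R k l| ≤ 1 := by
  have h := congrArg (fun M : M3 => M l l) hR.1
  simp [Matrix.mul_apply, Matrix.one_apply, Matrix.transpose_apply] at h
  have hsq : (R k l)^2 ≤ 1 := by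
    calc (R k l)^2 = R k l * R k l := sq (R k l)
    _ ≤ ∑ x, R x l * R x l := Finset.single_le_sum (f := fun i => R i l * R i l)
        (fun i _ => mul_self_nonneg _) (Finset.mem_univ k)
    _ = 1 := h
  exact (sq_le_one_iff_abs_le_one (a := R k l)).mp hsq

lemma ae_so3 {μ : Measure M3} (hμ : IsHaarSO3 μ) : ∀ᵐ R ∂μ, R ∈ SO3 := by
  rw [MeasureTheory.ae_iff]
  convert hμ.carried using 2
  rfl

lemma trace_bound {F R : M3} (hR : R ∈ SO3) :
    (Fᵀ * R).trace ≤ ∑ i, ∑ j, |F i j| := by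
  have hexp : (Fᵀ * R).trace = ∑ i, ∑ j, F j i * R j i := by
    simp [Matrix.trace, Matrix.mul_apply, Matrix.diag, Matrix.transpose_apply]
  rw [hexp, Finset.sum_comm]
  refine Finset.sum_le_sum fun j _ => Finset.sum_le_sum fun i _ => ?_
  calc F j i * R j i ≤ |F j i * R j i| := le_abs_self _
  _ = |F j i| * |R j i| := abs_mul _ _
  _ ≤ |F j i| * 1 := mul_le_mul_of_nonneg_left (so3_entry_bound hR j i) (abs_nonneg _)
  _ = |F j i| := mul_one _

lemma integrable_entry {μ : Measure M3} (hμ : IsHaarSO3 μ) (F : M3) (k l : Fin 3) :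
    Integrable (fun Q : M3 => Q k l * Real.exp ((Fᵀ * Q).trace)) μ := by
  have hprob := hμ.prob
  refine Integrable.mono' (integrable_const (Real.exp (∑ i, ∑ j, |F i j|)))
    ((cont_integrand F k l).aestronglyMeasurable) ?_
  filter_upwards [ae_so3 hμ] with R hR
  rw [Real.norm_eq_abs, abs_mul, Real.abs_exp]
  calc |R k l| * Real.exp ((Fᵀ * R).trace)
      ≤ 1 * Real.exp (∑ i, ∑ j, |F i j|) := by
        exact mul_le_mul (so3_entry_bound hR k l)
          (Real.exp_le_exp.mpr (trace_bound hR)) (Real.exp_nonneg _) zero_le_one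
  _ = _ := one_mul _

lemma trace_key (F U V Q : M3) (hU : Uᵀ * U = 1) (hV : Vᵀ * V = 1) :
    ((U * F * Vᵀ)ᵀ * (U * Q * Vᵀ)).trace = (Fᵀ * Q).trace := by
  have h1 : (U * F * Vᵀ)ᵀ * (U * Q * Vᵀ) = V * (Fᵀ * Q * Vᵀ) := by
    rw [Matrix.transpose_mul, Matrix.transpose_mul, Matrix.transpose_transpose]
    calc V * (Fᵀ * Uᵀ) * (U * Q * Vᵀ) = V * (Fᵀ * ((Uᵀ * U) * (Q * Vᵀ))) := by
            noncomm_ring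
    _ = V * (Fᵀ * Q * Vᵀ) := by rw [hU]; noncomm_ring
  rw [h1, Matrix.trace_mul_comm, Matrix.mul_assoc (Fᵀ * Q), hV, Matrix.mul_one]

lemma map_conj {μ : Measure M3} (hμ : IsHaarSO3 μ) {U V : M3} (hU : U ∈ SO3) (hV : V ∈ SO3) :
    Measure.map (fun Q : M3 => U * Q * Vᵀ) μ = μ := by
  have hVT : Vᵀ ∈ SO3 := by
    constructor
    · rw [Matrix.transpose_transpose]
      exact mul_eq_one_comm.mp hV.1
    · rw [Matrix.det_transpose]; exact hV.2
  have m1 : Measurable (fun R : M3 => U * R) :=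
    (continuous_const.matrix_mul continuous_id').measurable
  have m2 : Measurable (fun R : M3 => R * Vᵀ) :=
    (continuous_id'.matrix_mul continuous_const).measurable
  have : (fun Q : M3 => U * Q * Vᵀ) = (fun R => R * Vᵀ) ∘ (fun R => U * R) := rfl
  rw [this, ← Measure.map_map m2 m1, hμ.map_left U hU, hμ.map_right Vᵀ hVT]

theorem first_moment_equivariant (μ : Measure M3) (hμ : IsHaarSO3 μ)
    (F U V : M3) (hU : U ∈ SO3) (hV : V ∈ SO3) :
    Matrix.of (fun i j => ∫ R, R i j * Real.exp (((U * F * Vᵀ)ᵀ * R).trace) ∂μ)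
      = U * Matrix.of (fun i j => ∫ Q, Q i j * Real.exp ((Fᵀ * Q).trace) ∂μ) * Vᵀ := by
  ext i j
  have hmap := map_conj hμ hU hV
  have key : ∫ R, R i j * Real.exp (((U * F * Vᵀ)ᵀ * R).trace) ∂μ
      = ∫ Q, (U * Q * Vᵀ) i j * Real.exp ((Fᵀ * Q).trace) ∂μ := by
    conv_lhs => rw [← hmap]
    rw [integral_map (((continuous_const.matrix_mul
        continuous_id').matrix_mul continuous_const).measurable.aemeasurable)
      ((cont_integrand (U * F * Vᵀ) i j).aestronglyMeasurable)]
    · congr 1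
      funext Q
      rw [trace_key F U V Q hU.1 hV.1]
  rw [Matrix.of_apply, key]
  have expand : ∀ Q : M3, (U * Q * Vᵀ) i j * Real.exp ((Fᵀ * Q).trace)
      = ∑ l, ∑ k, (U i k * V j l) * (Q k l * Real.exp ((Fᵀ * Q).trace)) := by
    intro Q
    rw [Matrix.mul_apply]
    rw [Finset.sum_mul]
    refine Finset.sum_congr rfl fun l _ => ?_
    rw [Matrix.mul_apply, Finset.sum_mul, Finset.sum_mul]
    refine Finset.sum_congr rfl fun k _ => ?_
    simp [Matrix.transpose_apply]; ring
  simp_rw [expand]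
  rw [integral_finset_sum _ (fun l _ => integrable_finset_sum _
    (fun k _ => (integrable_entry hμ F k l).const_mul _))]
  have : (U * Matrix.of (fun k l => ∫ Q, Q k l * Real.exp ((Fᵀ * Q).trace) ∂μ) * Vᵀ) i j
      = ∑ l, ∑ k, (U i k * V j l) * (∫ Q, Q k l * Real.exp ((Fᵀ * Q).trace) ∂μ) := by
    rw [Matrix.mul_apply]
    refine Finset.sum_congr rfl fun l _ => ?_
    rw [Matrix.mul_apply, Finset.sum_mul]
    refine Finset.sum_congr rfl fun k _ => ?_
    simp [Matrix.transpose_apply]; ring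
  rw [this]
  refine Finset.sum_congr rfl fun l _ => ?_
  rw [integral_finset_sum _ (fun k _ => (integrable_entry hμ F k l).const_mul _)]
  refine Finset.sum_congr rfl fun k _ => ?_
  rw [integral_const_mul]
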